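/- Let k ∈ ℤ_{>0} and m₁, m₂ ∈ ℤ. Then Σ(2^k, −2^k; m₁,m₂) = 2^k·δ_{2|k}·( δ_{2^k | m₁}·2^k + δ_{2^k | m₂}·2^k − δ_{2^{k−1} | m₁}·2^{k−1} + ∑_{i=1}^{k−1} (−1)^i·g(2², m₁, 2^{k−i})·g(2², m₂, 2^i) + ∑_{i=1}^{k−1} δ_{2^{i−1} | m₂}·2^{i−1}·g(2², m₁, 2^{k−i}) ). -/

import Mathlib

/-- The Kronecker symbol at a prime `p`. -/
def kronPrime (a : ℤ) (p : ℕ) : ℤ :=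
  if p = 2 then (if a % 2 = 0 then 0 else if a % 8 = 1 ∨ a % 8 = 7 then 1 else -1)
  else jacobiSym a p

/-- The Kronecker symbol `(a/n)`. -/
def kron (a n : ℤ) : ℤ :=
  if n = 0 then (if a = 1 ∨ a = -1 then 1 else 0)
  else (if a < 0 ∧ n < 0 then -1 else 1) *
    n.natAbs.factorization.prod fun p e => kronPrime a p ^ e

/-- `e2pi r = exp(2πir)`. -/
noncomputable def e2pi (r : ℚ) : ℂ :=
  Complex.exp (2 * Real.pi * Complex.I * (r : ℂ))

/-- The set `S(A₁,A₂)` of normalized tuples `(B₁,C₁,B₂,C₂)` satisfying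
`A₁C₂ + 4B₁B₂ + C₁A₂ = 0`, the gcd conditions, `Cᵢ ≡ -1 (mod 4)` and the
normalization inequalities. -/
def PlSet (A₁ A₂ : ℤ) : Set (ℤ × ℤ × ℤ × ℤ) :=
  {v | A₁ * v.2.2.2 + 4 * v.1 * v.2.2.1 + v.2.1 * A₂ = 0 ∧
    Int.gcd A₁ (Int.gcd v.1 v.2.1) = 1 ∧
    Int.gcd A₂ (Int.gcd v.2.2.1 v.2.2.2) = 1 ∧
    v.2.1 ≡ -1 [ZMOD 4] ∧ v.2.2.2 ≡ -1 [ZMOD 4] ∧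
    0 ≤ (v.1 : ℚ) / (A₁ : ℚ) ∧ (v.1 : ℚ) / (A₁ : ℚ) < 1 ∧
    0 ≤ (v.2.2.1 : ℚ) / (A₂ : ℚ) ∧ (v.2.2.1 : ℚ) / (A₂ : ℚ) < 1 ∧
    0 ≤ (v.2.2.2 : ℚ) / (4 * (A₂ : ℚ)) ∧ (v.2.2.2 : ℚ) / (4 * (A₂ : ℚ)) < 1}

/-- The splitting `s` in Plücker coordinates. -/
def ssplit (A₁ A₂ : ℤ) (v : ℤ × ℤ × ℤ × ℤ) : ℤ :=
  let D : ℤ := Int.gcd A₁ A₂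
  let D₁ : ℤ := Int.gcd D v.1
  let D₂ : ℤ := D / D₁
  kron (kron (-1) (v.1 / D₁)) (-(A₁ * A₂)) * kron (A₁ / D) (A₂ / D) *
    kron (v.1 / D₁) (A₁ / D) * kron (4 * v.2.2.1 / D₂) (A₂.sign * A₂ / D) *
    kron D₁ v.2.1 * kron D₂ v.2.2.2

/-- The exponential sum `Σ(A₁,A₂;m₁,m₂)`. -/
noncomputable def SigmaExp (A₁ A₂ m₁ m₂ : ℤ) : ℂ :=
  ∑' v : ↥(PlSet A₁ A₂),
    (ssplit A₁ A₂ v.val : ℂ) *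
      e2pi ((m₁ : ℚ) * ((v.val.1 : ℚ) / (A₁ : ℚ)) + (m₂ : ℚ) * ((v.val.2.2.1 : ℚ) / (A₂ : ℚ)))

/-- The Gauss sum `g(p^j, m, p^t)`, summing over the units of `ℤ/p^tℤ`. -/
noncomputable def gaussG (p j : ℕ) (m : ℚ) (t : ℕ) : ℂ :=
  ∑ x ∈ Finset.filter (fun x => Nat.gcd x (p ^ t) = 1) (Finset.range (p ^ t)),
    (kron (x : ℤ) (p : ℤ) ^ j : ℂ) * e2pi (m * (x : ℚ) / ((p : ℚ) ^ t))

open Classical in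
/-- `delta P = 1` if `P` holds and `0` otherwise. -/
noncomputable def delta (P : Prop) : ℂ := if P then 1 else 0


section Aux

lemma kron_one_right (a : ℤ) : kron a 1 = 1 := by
  simp [kron, Nat.factorization_one]

lemma factorization_prod_kronPrime (a : ℤ) {n : ℕ} (h0 : n ≠ 0) (hodd : Odd n) :
    (n.factorization.prod fun p e => kronPrime a p ^ e) = jacobiSym a n := by
  have hmul : ∀ x y : ℕ, x.Coprime y →
      jacobiSym a (x * y) = jacobiSym a x * jacobiSym a y := by
    intro x y hxy
    rcases Nat.eq_zero_or_pos x with rfl | hx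
    · have : y = 1 := by simpa [Nat.coprime_zero_left] using hxy
      simp [this]
    rcases Nat.eq_zero_or_pos y with rfl | hy
    · have : x = 1 := by simpa [Nat.coprime_zero_right] using hxy
      simp [this]
    have : NeZero x := ⟨hx.ne'⟩
    have : NeZero y := ⟨hy.ne'⟩
    exact jacobiSym.mul_right a x y
  have h := Nat.multiplicative_factorization (fun m => jacobiSym a m) hmul (by simp) h0
  rw [h]
  refine Finsupp.prod_congr fun p hp => ?_
  rw [Nat.support_factorization] at hp
  have hprime : p.Prime := Nat.prime_of_mem_primeFactors hp
  have hp2 : p ≠ 2 := by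
    rintro rfl
    have hdvd : 2 ∣ n := Nat.dvd_of_mem_primeFactors hp
    have := Nat.odd_iff.mp hodd
    omega
  rw [jacobiSym.pow_right, kronPrime, if_neg hp2]

lemma kron_eval_nonneg (a n : ℤ) (hn : n ≠ 0) (ha : ¬ a < 0) (hodd : Odd n.natAbs) :
    kron a n = jacobiSym a n.natAbs := by
  rw [kron, if_neg hn, if_neg (by tauto), one_mul,
    factorization_prod_kronPrime a (by simpa using hn) hodd]

lemma kron_two_pow_neg (a t : ℕ) :
    kron ((2:ℤ)^a) (-(4*(t:ℤ)+1)) = ((-1:ℤ)^t)^a := by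
  have hn : (-(4*(t:ℤ)+1)) ≠ 0 := by omega
  have hna : (-(4*(t:ℤ)+1)).natAbs = 4*t+1 := by omega
  rw [kron_eval_nonneg _ _ hn (by simp) (by rw [hna]; exact ⟨2*t, by ring⟩), hna]
  have h2 : ((2:ℤ)^a) = ((2:ℤ))^a := rfl
  rw [jacobiSym.pow_left, jacobiSym.at_two ⟨2*t, by ring⟩]
  congr 1
  rw [ZMod.χ₈_nat_eq_if_mod_eight]
  rcases Nat.even_or_odd t with ⟨s, rfl⟩ | hodd
  · rw [if_neg (by omega), if_pos (by omega)]
    exact (Even.neg_one_pow ⟨s, rfl⟩).symm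
  · obtain ⟨s, rfl⟩ := hodd
    have h8 : (4*(2*s+1)+1) % 8 = 5 := by omega
    rw [if_neg (by omega), if_neg (by omega), Odd.neg_one_pow ⟨s, by ring⟩]

lemma kron_neg_one_isUnit (u : ℤ) : IsUnit (kron (-1) u) := by
  rw [kron]
  split
  · simp
  refine IsUnit.mul (by split <;> simp) ?_
  rw [Finsupp.prod]
  refine Finset.prod_induction _ IsUnit (fun a b ha hb => ha.mul hb) isUnit_one ?_
  intro p hp
  rw [Nat.support_factorization] at hp
  have hprime := Nat.prime_of_mem_primeFactors hp
  refine IsUnit.pow _ ?_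
  rw [kronPrime]
  split
  · norm_num
  · rcases jacobiSym.eq_one_or_neg_one (a := -1) (b := p) (by simp [Int.gcd]) with h | h <;>
      simp [h]

lemma kron_unit_two_pow (ε : ℤ) (hε : IsUnit ε) (m : ℕ) : kron ε (2 ^ m) = 1 := by
  have hodd : ε % 2 = 1 := by
    rcases Int.isUnit_iff.mp hε with rfl | rfl <;> decide
  have h8 : ε % 8 = 1 ∨ ε % 8 = 7 := by
    rcases Int.isUnit_iff.mp hε with rfl | rfl <;> decide
  rw [kron, if_neg (by positivity), if_neg (by push_neg; intro _; positivity), one_mul]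
  have : ((2:ℤ) ^ m).natAbs = 2 ^ m := by
    rw [Int.natAbs_pow]; rfl
  rw [this]
  rcases Nat.eq_zero_or_pos m with rfl | hm
  · simp [Nat.factorization_one]
  rw [Nat.Prime.factorization_pow Nat.prime_two,
    Finsupp.prod_single_index (by simp)]
  rw [kronPrime, if_pos rfl, if_neg (by omega), if_pos h8, one_pow]

lemma kron_odd_two_sq (x : ℤ) (hx : x % 2 = 1) : kron x 2 ^ 2 = 1 := by
  rw [kron, if_neg (by norm_num), if_neg (by norm_num)]
  have : (2:ℤ).natAbs = 2 := rfl
  rw [this, one_mul, show (2:ℕ) = 2^1 from rfl,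
    Nat.Prime.factorization_pow Nat.prime_two,
    Finsupp.prod_single_index (by simp), kronPrime, if_pos rfl, if_neg (by omega)]
  split <;> norm_num

lemma e2pi_add (q r : ℚ) : e2pi (q + r) = e2pi q * e2pi r := by
  rw [e2pi, e2pi, e2pi, ← Complex.exp_add]
  push_cast
  ring_nf

lemma e2pi_intCast (n : ℤ) : e2pi n = 1 :=
  Complex.exp_eq_one_iff.mpr ⟨n, by push_cast; ring⟩

lemma e2pi_eq_one_iff (q : ℚ) : e2pi q = 1 ↔ ∃ n : ℤ, q = n := by
  rw [e2pi, Complex.exp_eq_one_iff]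
  constructor
  · rintro ⟨n, h⟩
    refine ⟨n, ?_⟩
    have h2 : (2 * (Real.pi:ℂ) * Complex.I : ℂ) ≠ 0 :=
      mul_ne_zero (mul_ne_zero two_ne_zero (Complex.ofReal_ne_zero.mpr Real.pi_ne_zero))
        Complex.I_ne_zero
    have : (q : ℂ) = (n : ℂ) := by
      apply mul_left_cancel₀ h2
      linear_combination h
    exact_mod_cast this
  · rintro ⟨n, rfl⟩
    exact ⟨n, by push_cast; ring⟩

lemma e2pi_nat_mul (q : ℚ) (n : ℕ) : e2pi (n * q) = e2pi q ^ n := by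
  induction n with
  | zero => simpa using e2pi_intCast 0
  | succ n ih =>
    rw [pow_succ, ← ih, ← e2pi_add]
    congr 1
    push_cast
    ring

lemma sum_e2pi_geom (m : ℤ) (T : ℕ) (hT : 0 < T) :
    ∑ y ∈ Finset.range T, e2pi ((m : ℚ) * y / T) =
      if (T : ℤ) ∣ m then (T : ℂ) else 0 := by
  have hTQ : (T : ℚ) ≠ 0 := by positivity
  have hterm : ∀ y : ℕ, e2pi ((m : ℚ) * y / T) = e2pi ((m : ℚ) / T) ^ y := by
    intro y
    rw [← e2pi_nat_mul]
    congr 1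
    ring
  simp only [hterm]
  by_cases hdvd : (T : ℤ) ∣ m
  · obtain ⟨c, rfl⟩ := hdvd
    have : ((T * c : ℤ) : ℚ) / T = (c : ℚ) := by push_cast; field_simp
    rw [if_pos ⟨c, rfl⟩, this]
    have : e2pi (c : ℚ) = 1 := e2pi_intCast c
    simp [this]
  · rw [if_neg hdvd]
    have hne : e2pi ((m : ℚ) / T) ≠ 1 := by
      intro h
      obtain ⟨n, hn⟩ := (e2pi_eq_one_iff _).mp h
      apply hdvd
      refine ⟨n, ?_⟩
      have : (m : ℚ) = T * n := by field_simp at hn; linarith [hn]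
      exact_mod_cast this
    rw [geom_sum_eq hne]
    have : e2pi ((m : ℚ) / T) ^ T = 1 := by
      rw [← e2pi_nat_mul]
      have : (T : ℚ) * ((m : ℚ) / T) = (m : ℚ) := by field_simp
      rw [this]
      exact e2pi_intCast m
    rw [this]
    simp

open Finset

lemma coprime_two_pow_iff (x t : ℕ) (ht : 1 ≤ t) : Nat.gcd x (2^t) = 1 ↔ Odd x := by
  rw [show (Nat.gcd x (2^t) = 1) = Nat.Coprime x (2^t) from rfl,
    Nat.coprime_pow_right_iff ht, Nat.coprime_two_right]

lemma even_sum_halve (n : ℕ) (f : ℕ → ℂ) :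
    ∑ x ∈ (range (2*n)).filter (fun x => ¬ Odd x), f x = ∑ z ∈ range n, f (2*z) := by
  refine Finset.sum_nbij' (fun x => x / 2) (fun z => 2 * z) ?_ ?_ ?_ ?_ ?_
  · intro x hx
    simp only [mem_filter, mem_range, Nat.not_odd_iff_even, Nat.even_iff] at hx
    simp only [mem_range]
    omega
  · intro z hz
    simp only [mem_range] at hz
    simp only [mem_filter, mem_range, Nat.not_odd_iff_even, Nat.even_iff]
    omega
  · intro x hx
    simp only [mem_filter, Nat.not_odd_iff_even, Nat.even_iff] at hx
    omega
  · intro z _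
    omega
  · intro x hx
    simp only [mem_filter, Nat.not_odd_iff_even, Nat.even_iff] at hx
    congr 1
    omega

lemma gaussG_eq_oddSum (m : ℤ) (t : ℕ) (ht : 1 ≤ t) :
    gaussG 2 2 (m : ℚ) t =
      ∑ x ∈ (range (2^t)).filter Odd, e2pi ((m : ℚ) * x / (2^t : ℕ)) := by
  rw [gaussG]
  rw [filter_congr (fun x _ => by
    rw [show ((Nat.gcd x (2^t) = 1)) = (Odd x) from
      propext (coprime_two_pow_iff x t ht)])]
  refine Finset.sum_congr rfl fun x hx => ?_
  simp only [mem_filter, mem_range] at hx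
  have hodd : (x : ℤ) % 2 = 1 := by
    have := Nat.odd_iff.mp hx.2; omega
  have h1 : kron (x:ℤ) (((2:ℕ)):ℤ) ^ 2 = 1 := by
    rw [show (((2:ℕ)):ℤ) = 2 from rfl]; exact kron_odd_two_sq _ hodd
  rw [show (((kron (x:ℤ) (((2:ℕ)):ℤ)) : ℂ) ^ 2) = ((kron (x:ℤ) (((2:ℕ)):ℤ) ^ 2 : ℤ) : ℂ) from by
    push_cast; ring, h1]
  rw [Int.cast_one, one_mul]
  congr 1
  push_cast
  ring

lemma oddSum_eval (m : ℤ) (t : ℕ) (ht : 1 ≤ t) :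
    ∑ x ∈ (range (2^t)).filter Odd, e2pi ((m : ℚ) * x / (2^t : ℕ)) =
      (if ((2^t : ℕ) : ℤ) ∣ m then ((2^t : ℕ) : ℂ) else 0) -
        (if ((2^(t-1) : ℕ) : ℤ) ∣ m then ((2^(t-1) : ℕ) : ℂ) else 0) := by
  have hsplit := Finset.sum_filter_add_sum_filter_not (range (2^t)) Odd
    (fun x => e2pi ((m : ℚ) * x / (2^t : ℕ)))
  have htot := sum_e2pi_geom m (2^t) (by positivity)
  have heven : ∑ x ∈ (range (2^t)).filter (fun x => ¬ Odd x),
      e2pi ((m : ℚ) * x / (2^t : ℕ)) =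
      (if ((2^(t-1) : ℕ) : ℤ) ∣ m then ((2^(t-1) : ℕ) : ℂ) else 0) := by
    have h2t : 2^t = 2 * 2^(t-1) := by
      rw [← pow_succ']
      congr 1
      omega
    rw [h2t, even_sum_halve (2^(t-1)) (fun x => e2pi ((m : ℚ) * x / ((2*2^(t-1) : ℕ))))]
    rw [← sum_e2pi_geom m (2^(t-1)) (by positivity)]
    refine Finset.sum_congr rfl fun z hz => ?_
    congr 1
    have : ((2:ℚ))^(t-1) ≠ 0 := by positivity
    push_cast
    field_simp
  rw [heven] at hsplit
  have : ∑ x ∈ (range (2^t)).filter Odd, e2pi ((m : ℚ) * x / (2^t : ℕ)) =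
      (∑ y ∈ range (2^t), e2pi ((m : ℚ) * y / (2^t : ℕ))) -
      (if ((2^(t-1) : ℕ) : ℤ) ∣ m then ((2^(t-1) : ℕ) : ℂ) else 0) := by
    rw [← hsplit]; ring
  rw [this]
  rw [show (∑ y ∈ range (2^t), e2pi ((m : ℚ) * y / (2^t : ℕ))) =
      ∑ y ∈ range (2^t), e2pi ((m : ℚ) * y / ((2^t : ℕ) : ℚ)) from rfl, htot]

lemma odd_part_decomp (k : ℕ) (f : ℕ → ℂ) :
    ∑ b ∈ range (2^k), f b =
      f 0 + ∑ a ∈ range k, ∑ u ∈ (range (2^(k-a))).filter Odd, f (2^a * u) := by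
  induction k generalizing f with
  | zero => simp
  | succ k ih =>
    rw [← Finset.sum_filter_add_sum_filter_not (range (2^(k+1))) Odd]
    have heven : ∑ x ∈ (range (2^(k+1))).filter (fun x => ¬ Odd x), f x
        = ∑ z ∈ range (2^k), f (2*z) := by
      rw [show (2:ℕ)^(k+1) = 2*2^k from by ring]
      exact even_sum_halve _ f
    rw [heven, ih (fun z => f (2*z))]
    rw [Finset.sum_range_succ'
      (fun a => ∑ u ∈ (range (2^(k+1-a))).filter Odd, f (2^a*u)) k]
    have h1 : ∀ a ∈ range k,
        (∑ u ∈ (range (2^(k-a))).filter Odd, f (2*(2^a*u))) =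
        ∑ u ∈ (range (2^(k+1-(a+1)))).filter Odd, f (2^(a+1)*u) := by
      intro a ha
      have : k+1-(a+1) = k-a := by omega
      rw [this]
      refine Finset.sum_congr rfl fun u hu => ?_
      congr 1
      ring
    rw [Finset.sum_congr rfl h1]
    have h0 : (∑ u ∈ (range (2^(k+1-0))).filter Odd, f (2^0*u)) =
        ∑ u ∈ (range (2^(k+1))).filter Odd, f u := by
      refine Finset.sum_congr (by norm_num) fun u hu => by norm_num
    rw [h0]
    ring

end Aux

lemma kron_one_left (n : ℤ) : kron 1 n = 1 := by
  rw [kron]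
  split
  · norm_num
  rw [if_neg (by norm_num), one_mul]
  have h : ∀ p ∈ n.natAbs.factorization.support,
      kronPrime 1 p ^ (n.natAbs.factorization p)
        = (fun (_:ℕ) (e:ℕ) => (1:ℤ)^e) p (n.natAbs.factorization p) := by
    intro p hp
    have h1 : kronPrime 1 p = 1 := by
      rw [kronPrime]
      split
      · norm_num
      · exact jacobiSym.one_left p
    rw [h1]
  rw [Finsupp.prod_congr h]
  simp [Finsupp.prod]

lemma int_gcd_two_pow (k a u : ℕ) (ha : a ≤ k) (hu : Odd u) :
    Int.gcd ((2:ℤ)^k) ((2^a*u : ℕ) : ℤ) = 2^a := by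
  have h1 : Int.gcd ((2:ℤ)^k) ((2^a*u : ℕ) : ℤ) = Nat.gcd (2^k) (2^a*u) := by
    rw [show ((2^a*u : ℕ) : ℤ) = ((2^a*u : ℕ) : ℤ) from rfl, Int.gcd,
      Int.natAbs_natCast, Int.natAbs_pow]
    rfl
  rw [h1, show (2:ℕ)^k = 2^a * 2^(k-a) from by rw [← pow_add]; congr 1; omega,
    Nat.gcd_mul_left]
  have hcop : Nat.Coprime (2^(k-a)) u :=
    Nat.Coprime.pow_left _ (Nat.coprime_two_left.mpr hu)
  rw [hcop, mul_one]

lemma ssplit_eval_pos (k a u β t c : ℕ) (hk : 0 < k) (ha : a < k) (hu : Odd u) :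
    ssplit ((2:ℤ)^k) (-(2:ℤ)^k)
      (((2^a*u : ℕ) : ℤ), -(4*((t+c : ℕ) : ℤ)+1), -((β : ℕ) : ℤ), -(4*(t : ℤ)+1))
      = ((-1)^(t+c))^a * ((-1)^t)^(k-a) := by
  have hD : ((Int.gcd ((2:ℤ)^k) (-(2:ℤ)^k) : ℕ) : ℤ) = 2^k := by
    rw [Int.gcd]
    simp [Int.natAbs_pow]
  have hD1 : ((Int.gcd ((2:ℤ)^k) ((2^a*u : ℕ) : ℤ) : ℕ) : ℤ) = 2^a := by
    rw [int_gcd_two_pow k a u ha.le hu]; push_cast; ring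
  have h2k : ((2:ℤ)^k) ≠ 0 := by positivity
  have h2a : ((2:ℤ)^a) ≠ 0 := by positivity
  simp only [ssplit, hD, hD1]
  have e0 : ((2^a*u : ℕ) : ℤ) / 2^a = (u : ℤ) := by
    rw [show ((2^a*u : ℕ) : ℤ) = 2^a * u from by push_cast; ring,
      Int.mul_ediv_cancel_left _ h2a]
  have e4 : ((-(2:ℤ)^k).sign * -2^k) / 2^k = 1 := by
    rw [show ((-(2:ℤ)^k)).sign = -1 from by
      rw [Int.sign_eq_neg_one_iff_neg]; simp [pow_pos],
      show ((-1:ℤ) * -2^k) = 2^k from by ring, Int.ediv_self h2k]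
  have e2 : (-(2:ℤ)^k) / 2^k = -1 := by
    rw [show (-(2:ℤ)^k) = 2^k * (-1) from by ring, Int.mul_ediv_cancel_left _ h2k]
  have e3 : ((2:ℤ)^k) / 2^a = 2^(k-a) := by
    rw [show ((2:ℤ)^k) = 2^a * 2^(k-a) from by rw [← pow_add]; congr 1; omega,
      Int.mul_ediv_cancel_left _ h2a]
  have e1 : ((2:ℤ)^k) / 2^k = 1 := Int.ediv_self h2k
  rw [e0, e4, e2, e3, e1]
  have e5 : -((2:ℤ)^k * -2^k) = 2^(k+k) := by rw [pow_add]; ring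
  rw [e5, kron_unit_two_pow _ (kron_neg_one_isUnit _), kron_one_left,
    kron_one_right, kron_one_right, kron_two_pow_neg a (t+c), kron_two_pow_neg (k-a) t]
  ring

lemma ssplit_eval_zero (k β t : ℕ) (hk : 0 < k) :
    ssplit ((2:ℤ)^k) (-(2:ℤ)^k)
      (((0:ℕ) : ℤ), -(4*((t+0 : ℕ) : ℤ)+1), -((β : ℕ) : ℤ), -(4*(t : ℤ)+1))
      = ((-1)^t)^k := by
  have h2k : ((2:ℤ)^k) ≠ 0 := by positivity
  have hD : ((Int.gcd ((2:ℤ)^k) (-(2:ℤ)^k) : ℕ) : ℤ) = 2^k := by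
    rw [Int.gcd]
    simp [Int.natAbs_pow]
  have hD1 : ((Int.gcd ((2:ℤ)^k) (((0:ℕ)) : ℤ) : ℕ) : ℤ) = 2^k := by
    rw [show (((0:ℕ)):ℤ) = 0 from rfl, Int.gcd]
    simp [Int.natAbs_pow]
  simp only [ssplit, hD, hD1]
  have e0 : (((0:ℕ)) : ℤ) / 2^k = (0 : ℤ) := by
    rw [show (((0:ℕ)):ℤ) = 0 from rfl, Int.zero_ediv]
  have e4 : ((-(2:ℤ)^k).sign * -2^k) / 2^k = 1 := by
    rw [show ((-(2:ℤ)^k)).sign = -1 from by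
      rw [Int.sign_eq_neg_one_iff_neg]; simp [pow_pos],
      show ((-1:ℤ) * -2^k) = 2^k from by ring, Int.ediv_self h2k]
  have e2 : (-(2:ℤ)^k) / 2^k = -1 := by
    rw [show (-(2:ℤ)^k) = 2^k * (-1) from by ring, Int.mul_ediv_cancel_left _ h2k]
  have e1 : ((2:ℤ)^k) / 2^k = 1 := Int.ediv_self h2k
  rw [e0, e4, e2, e1]
  have e5 : -((2:ℤ)^k * -2^k) = 2^(k+k) := by rw [pow_add]; ring
  have ek : kron (-1) 0 = 1 := by rw [kron]; norm_num
  rw [ek, e5, kron_unit_two_pow _ isUnit_one, kron_one_left, kron_one_right,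
    kron_one_right, show ((t+0:ℕ)) = t from by omega, kron_two_pow_neg k t,
    kron_one_left]
  ring

def Tset (k : ℕ) : Finset (ℕ × ℕ × ℕ) :=
  ((Finset.range (2^k)) ×ˢ (Finset.range (2^k)) ×ˢ (Finset.range (2^k))).filter
    (fun v => 2^k ∣ v.1 * v.2.1)

def phimap (k : ℕ) (v : ℕ × ℕ × ℕ) : ℤ × ℤ × ℤ × ℤ :=
  ((v.1 : ℤ), -(4*((v.2.2 + v.1*v.2.1/2^k : ℕ) : ℤ)+1), -((v.2.1 : ℕ) : ℤ),
    -(4*(v.2.2 : ℤ)+1))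

lemma int_gcd_pow_odd (k : ℕ) (A : ℤ) (hA : A.natAbs = 2^k) (B C : ℤ)
    (hC : C % 2 = 1) : Int.gcd A ((Int.gcd B C : ℕ) : ℤ) = 1 := by
  have h1 : Int.gcd A ((Int.gcd B C : ℕ) : ℤ) = Nat.gcd (2^k) (Int.gcd B C) := by
    rw [Int.gcd, hA, Int.natAbs_natCast]
  rw [h1]
  have hdvd : (Int.gcd B C) ∣ C.natAbs := Nat.gcd_dvd_right _ _
  have hCn : C.natAbs % 2 = 1 := by omega
  have hodd : Odd (Int.gcd B C) := by
    rcases hdvd with ⟨c, hc⟩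
    rcases Nat.even_or_odd (Int.gcd B C) with ⟨s, hs⟩ | h
    · rw [hs] at hc
      have : (s+s)*c = 2*(s*c) := by ring
      omega
    · exact h
  exact Nat.Coprime.pow_left _ (Nat.coprime_two_left.mpr hodd)

lemma plset_eq (k : ℕ) (hk : 0 < k) :
    PlSet ((2:ℤ)^k) (-(2:ℤ)^k) = ↑((Tset k).image (phimap k)) := by
  have h2kq : (0:ℚ) < 2^k := by positivity
  have h4kq : (0:ℚ) < 4*2^k := by positivity
  have h2kz : ((2:ℤ)^k) ≠ 0 := by positivity
  ext v
  obtain ⟨B₁, C₁, B₂, C₂⟩ := v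
  simp only [PlSet, Set.mem_setOf_eq, Finset.coe_image, Set.mem_image,
    Finset.mem_coe, Tset, Finset.mem_filter, Finset.mem_product,
    Finset.mem_range]
  constructor
  · rintro ⟨heq, hg1, hg2, hC1, hC2, h1, h2, h3, h4, h5, h6⟩
    unfold Int.ModEq at hC1 hC2
    push_cast at h1 h2 h3 h4 h5 h6
    rw [le_div_iff₀ h2kq] at h1
    rw [div_lt_one h2kq] at h2
    have hB1a : 0 ≤ B₁ := by exact_mod_cast (by linarith : (0:ℚ) ≤ (B₁:ℚ))
    have hB1b : B₁ < 2^k := by exact_mod_cast h2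
    rw [show ((B₂:ℚ))/(-(2^k)) = -((B₂:ℚ)/2^k) from by ring] at h3 h4
    rw [le_neg] at h3
    rw [neg_lt] at h4
    rw [div_le_iff₀ h2kq] at h3
    rw [lt_div_iff₀ h2kq] at h4
    have hB2a : B₂ ≤ 0 := by exact_mod_cast (by linarith : (B₂:ℚ) ≤ 0)
    have hB2b : -(2^k) < B₂ := by
      have : (-(2^k) : ℚ) < (B₂:ℚ) := by linarith
      exact_mod_cast this
    rw [show ((C₂:ℚ))/(4*(-(2^k))) = -((C₂:ℚ)/(4*2^k)) from by ring] at h5 h6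
    rw [le_neg] at h5
    rw [neg_lt] at h6
    rw [div_le_iff₀ h4kq] at h5
    rw [lt_div_iff₀ h4kq] at h6
    have hC2a : C₂ ≤ 0 := by exact_mod_cast (by linarith : (C₂:ℚ) ≤ 0)
    have hC2b : -(4*2^k) < C₂ := by
      have : (-(4*2^k) : ℚ) < (C₂:ℚ) := by linarith
      exact_mod_cast this
    set b := B₁.toNat with hbdef
    set β := (-B₂).toNat with hβdef
    set t := ((-(C₂+1))/4).toNat with htdef
    have hb : (b:ℤ) = B₁ := Int.toNat_of_nonneg hB1a
    have hβ : (β:ℤ) = -B₂ := Int.toNat_of_nonneg (by omega)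
    have ht : C₂ = -(4*(t:ℤ)+1) := by omega
    obtain ⟨d, hd⟩ : (4:ℤ) ∣ C₁ - C₂ := by omega
    have hBBd : B₁ * B₂ = 2^k * d := by
      apply mul_left_cancel₀ (show (4:ℤ) ≠ 0 by norm_num)
      linear_combination heq + (2:ℤ)^k * hd
    have hbβd : (b:ℤ) * β = 2^k * (-d) := by
      rw [hb, hβ]
      linear_combination -hBBd
    have hdvdz : ((2^k : ℕ) : ℤ) ∣ ((b*β : ℕ) : ℤ) := by
      push_cast
      exact ⟨-d, hbβd⟩
    have hdvd : 2^k ∣ b*β := Int.natCast_dvd_natCast.mp hdvdz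
    have hc₀ : ((b*β/2^k : ℕ) : ℤ) = -d := by
      have h := Nat.div_mul_cancel hdvd
      have hcast : ((b*β/2^k : ℕ) : ℤ) * 2^k = (b:ℤ)*β := by
        exact_mod_cast congrArg (fun x : ℕ => (x : ℤ)) h
      apply mul_right_cancel₀ h2kz
      rw [hcast, hbβd]
      ring
    have hC1val : C₁ = -(4*((t + b*β/2^k : ℕ) : ℤ)+1) := by
      rw [show ((t + b*β/2^k : ℕ) : ℤ) = (t:ℤ) + ((b*β/2^k : ℕ) : ℤ) from by
        push_cast; ring, hc₀]
      omega
    refine ⟨(b, β, t), ⟨⟨?_, ?_, ?_⟩, hdvd⟩, ?_⟩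
    · have h' : (b:ℤ) < (2:ℤ)^k := by rw [hb]; exact hB1b
      exact_mod_cast h'
    · have h' : (β:ℤ) < (2:ℤ)^k := by rw [hβ]; linarith
      exact_mod_cast h'
    · have h' : (t:ℤ) < (2:ℤ)^k := by linarith [ht, hC2b]
      exact_mod_cast h'
    · simp only [phimap, Prod.mk.injEq]
      exact ⟨hb, hC1val.symm, by omega, by omega⟩
  · rintro ⟨⟨b, β, t⟩, ⟨⟨hb, hβ, ht⟩, hdvd⟩, hphi⟩
    dsimp only at hb hβ ht hdvd
    simp only [phimap, Prod.mk.injEq] at hphi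
    obtain ⟨e1, e2, e3, e4⟩ := hphi
    subst e1; subst e2; subst e3; subst e4
    have hc₀ : (2:ℤ)^k * ((b*β/2^k : ℕ) : ℤ) = (b:ℤ)*(β:ℤ) := by
      have h := Nat.mul_div_cancel' hdvd
      exact_mod_cast congrArg (fun x : ℕ => (x : ℤ)) h
    refine ⟨?_, ?_, ?_, ?_, ?_, ?_, ?_, ?_, ?_, ?_, ?_⟩
    · push_cast at hc₀ ⊢
      linear_combination 4 * hc₀
    · refine int_gcd_pow_odd k _ (by rw [Int.natAbs_pow]; rfl) _ _ ?_
      have : (0:ℤ) ≤ ((t + b*β/2^k : ℕ) : ℤ) := by positivity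
      omega
    · refine int_gcd_pow_odd k _ (by rw [Int.natAbs_neg, Int.natAbs_pow]; rfl) _ _ ?_
      omega
    · show _ % _ = _ % _
      have : (0:ℤ) ≤ ((t + b*β/2^k : ℕ) : ℤ) := by positivity
      omega
    · show _ % _ = _ % _
      omega
    · push_cast
      positivity
    · push_cast
      rw [div_lt_one h2kq]
      exact_mod_cast hb
    · rw [show ((-((β:ℕ):ℤ) : ℤ) : ℚ) / ((-(2:ℤ)^k : ℤ) : ℚ) = ((β:ℚ))/2^k from by
        push_cast; ring]
      positivity
    · rw [show ((-((β:ℕ):ℤ) : ℤ) : ℚ) / ((-(2:ℤ)^k : ℤ) : ℚ) = ((β:ℚ))/2^k from by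
        push_cast; ring]
      rw [div_lt_one h2kq]
      exact_mod_cast hβ
    · rw [show ((-(4*((t:ℕ):ℤ)+1) : ℤ) : ℚ) / (4*((-(2:ℤ)^k : ℤ) : ℚ))
          = (4*(t:ℚ)+1)/(4*2^k) from by push_cast; ring]
      positivity
    · rw [show ((-(4*((t:ℕ):ℤ)+1) : ℤ) : ℚ) / (4*((-(2:ℤ)^k : ℤ) : ℚ))
          = (4*(t:ℚ)+1)/(4*2^k) from by push_cast; ring]
      rw [div_lt_one h4kq]
      have h' : (t:ℚ) + 1 ≤ 2^k := by exact_mod_cast Nat.succ_le_of_lt ht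
      linarith

theorem stage5_test : True := trivial

noncomputable def Wfun (k : ℕ) (m₁ m₂ : ℤ) (v : ℕ × ℕ × ℕ) : ℂ :=
  ((ssplit ((2:ℤ)^k) (-(2:ℤ)^k) (phimap k v) : ℤ) : ℂ) *
    e2pi ((m₁ : ℚ) * (((phimap k v).1 : ℚ) / (((2:ℤ)^k : ℤ) : ℚ)) +
      (m₂ : ℚ) * (((phimap k v).2.2.1 : ℚ) / ((-(2:ℤ)^k : ℤ) : ℚ)))

lemma Wfun_zero (k : ℕ) (m₁ m₂ : ℤ) (β t : ℕ) (hk : 0 < k) :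
    Wfun k m₁ m₂ (0, β, t) =
      (-1:ℂ)^(t*k) * e2pi ((m₂ : ℚ) * β / ((2^k : ℕ) : ℚ)) := by
  have hphi : phimap k (0, β, t) =
      (((0:ℕ) : ℤ), -(4*((t+0 : ℕ) : ℤ)+1), -((β : ℕ) : ℤ), -(4*(t : ℤ)+1)) := by
    simp only [phimap]
    norm_num
  rw [Wfun, hphi, ssplit_eval_zero k β t hk]
  have harg : (m₁ : ℚ) * ((((0:ℕ) : ℤ) : ℚ) / (((2:ℤ)^k : ℤ) : ℚ)) +
      (m₂ : ℚ) * (((-((β : ℕ) : ℤ) : ℤ) : ℚ) / ((-(2:ℤ)^k : ℤ) : ℚ)) =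
      (m₂ : ℚ) * β / ((2^k : ℕ) : ℚ) := by
    have : ((2:ℚ))^k ≠ 0 := by positivity
    push_cast
    field_simp
    ring
  rw [harg]
  push_cast
  rw [← pow_mul]

lemma Wfun_pos (k a u β t : ℕ) (m₁ m₂ : ℤ) (hk : 0 < k) (ha : a < k) (hu : Odd u) :
    Wfun k m₁ m₂ (2^a*u, β, t) =
      (-1:ℂ)^(t*k) * ((-1:ℂ)^(((2^a*u)*β/2^k)*a) *
        (e2pi ((m₁ : ℚ) * (2^a*u : ℕ) / ((2^k : ℕ) : ℚ)) *
          e2pi ((m₂ : ℚ) * β / ((2^k : ℕ) : ℚ)))) := by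
  have hphi : phimap k (2^a*u, β, t) =
      (((2^a*u : ℕ) : ℤ), -(4*((t + (2^a*u)*β/2^k : ℕ) : ℤ)+1), -((β : ℕ) : ℤ),
        -(4*(t : ℤ)+1)) := rfl
  rw [Wfun, hphi, ssplit_eval_pos k a u β t ((2^a*u)*β/2^k) hk ha hu]
  have harg : (m₁ : ℚ) * ((((2^a*u : ℕ) : ℤ) : ℚ) / (((2:ℤ)^k : ℤ) : ℚ)) +
      (m₂ : ℚ) * (((-((β : ℕ) : ℤ) : ℤ) : ℚ) / ((-(2:ℤ)^k : ℤ) : ℚ)) =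
      (m₁ : ℚ) * (2^a*u : ℕ) / ((2^k : ℕ) : ℚ) + (m₂ : ℚ) * β / ((2^k : ℕ) : ℚ) := by
    have : ((2:ℚ))^k ≠ 0 := by positivity
    push_cast
    field_simp
  rw [harg, e2pi_add]
  push_cast
  set c := (2^a*u)*β/2^k
  rw [show ((-1:ℂ)^(t+c))^a * ((-1:ℂ)^t)^(k-a) = (-1:ℂ)^((t+c)*a + t*(k-a)) from by
    rw [← pow_mul, ← pow_mul, ← pow_add],
    show (t+c)*a + t*(k-a) = t*k + c*a from by
      have : k - a + a = k := by omega
      nlinarith [this],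
    pow_add]
  ring

lemma t_sum_eval (k : ℕ) (hk : 0 < k) :
    ∑ t ∈ Finset.range (2^k), (-1:ℂ)^(t*k) =
      if Even k then ((2^k : ℕ) : ℂ) else 0 := by
  by_cases hev : Even k
  · rw [if_pos hev]
    have : ∀ t ∈ Finset.range (2^k), (-1:ℂ)^(t*k) = 1 := by
      intro t _
      exact Even.neg_one_pow (hev.mul_left t)
    rw [Finset.sum_congr rfl this]
    simp
  · rw [if_neg hev]
    have hko : Odd k := Nat.not_even_iff_odd.mp hev
    have : ∀ t ∈ Finset.range (2^k), (-1:ℂ)^(t*k) = (-1:ℂ)^t := by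
      intro t _
      rcases Nat.even_or_odd t with ht | ht
      · rw [Even.neg_one_pow (ht.mul_right k), Even.neg_one_pow ht]
      · rw [Odd.neg_one_pow (ht.mul hko), Odd.neg_one_pow ht]
    rw [Finset.sum_congr rfl this, neg_one_geom_sum,
      if_pos (by exact (Nat.even_pow).mpr ⟨even_two, by omega⟩)]

lemma neg_one_pow_odd_mul (u y : ℕ) (hu : Odd u) : (-1:ℂ)^(u*y) = (-1:ℂ)^y := by
  obtain ⟨w, rfl⟩ := hu
  rw [show (2*w+1)*y = 2*(w*y) + y from by ring, pow_add, pow_mul, neg_one_sq,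
    one_pow, one_mul]

lemma beta_sum (k a u : ℕ) (ha : a < k) (hu : Odd u) (m₂ : ℤ) :
    ∑ β ∈ Finset.range (2^k),
      (if 2^k ∣ (2^a*u)*β then
        ((-1:ℂ)^(((2^a*u)*β/2^k)*a) * e2pi ((m₂ : ℚ) * β / ((2^k : ℕ) : ℚ))) else 0)
      = ∑ y ∈ Finset.range (2^a), (-1:ℂ)^(y*a) * e2pi ((m₂ : ℚ) * y / ((2^a : ℕ) : ℚ)) := by
  have hcond : ∀ β, (2^k ∣ (2^a*u)*β) ↔ (2^(k-a) ∣ β) := by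
    intro β
    rw [show (2:ℕ)^k = 2^a * 2^(k-a) from by rw [← pow_add]; congr 1; omega,
      show (2^a*u)*β = 2^a * (u*β) from by ring,
      mul_dvd_mul_iff_left (by positivity : (2:ℕ)^a ≠ 0)]
    constructor
    · intro h
      exact Nat.Coprime.dvd_of_dvd_mul_left
        (Nat.Coprime.pow_left _ (Nat.coprime_two_left.mpr hu)) h
    · intro h
      exact h.mul_left u
  rw [Finset.sum_congr rfl (fun β (_ : β ∈ Finset.range (2^k)) =>
      if_congr (hcond β) rfl rfl),
    ← Finset.sum_filter]
  refine Finset.sum_nbij' (fun β => β / 2^(k-a)) (fun y => 2^(k-a) * y)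
    ?_ ?_ ?_ ?_ ?_
  · intro β hβ
    simp only [Finset.mem_filter, Finset.mem_range] at hβ
    obtain ⟨hlt, c, rfl⟩ := hβ
    simp only [Finset.mem_range]
    rw [Nat.mul_div_cancel_left _ (by positivity : 0 < 2^(k-a))]
    have h1 : (2:ℕ)^(k-a) * c < 2^(k-a) * 2^a := by
      rw [← pow_add, show k-a+a = k from by omega]
      exact hlt
    exact lt_of_mul_lt_mul_left h1 (Nat.zero_le _)
  · intro y hy
    simp only [Finset.mem_range] at hy
    simp only [Finset.mem_filter, Finset.mem_range]
    refine ⟨?_, Dvd.intro _ rfl⟩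
    calc 2^(k-a) * y < 2^(k-a) * 2^a :=
          (mul_lt_mul_iff_right₀ (by positivity : 0 < (2:ℕ)^(k-a))).mpr hy
      _ = 2^k := by rw [← pow_add]; congr 1; omega
  · intro β hβ
    simp only [Finset.mem_filter, Finset.mem_range] at hβ
    obtain ⟨hlt, c, rfl⟩ := hβ
    rw [Nat.mul_div_cancel_left _ (by positivity : 0 < 2^(k-a))]
  · intro y hy
    rw [Nat.mul_div_cancel_left _ (by positivity : 0 < 2^(k-a))]
  · intro β hβ
    simp only [Finset.mem_filter, Finset.mem_range] at hβ
    obtain ⟨hlt, c, rfl⟩ := hβ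
    rw [Nat.mul_div_cancel_left _ (by positivity : 0 < 2^(k-a))]
    have hc : ((2^a*u)*(2^(k-a)*c))/2^k = u*c := by
      rw [show (2^a*u)*(2^(k-a)*c) = 2^k * (u*c) from by
        rw [show (2:ℕ)^k = 2^a * 2^(k-a) from by rw [← pow_add]; congr 1; omega]
        ring]
      exact Nat.mul_div_cancel_left _ (by positivity)
    rw [hc, show (u*c)*a = u*(c*a) from by ring, neg_one_pow_odd_mul u (c*a) hu]
    have harg : (m₂:ℚ) * ((2^(k-a)*c : ℕ) : ℚ) / ((2^k : ℕ) : ℚ)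
        = (m₂:ℚ) * (c : ℚ) / ((2^a : ℕ) : ℚ) := by
      have h1 : ((2:ℚ))^a ≠ 0 := by positivity
      have h2 : ((2:ℚ))^(k-a) ≠ 0 := by positivity
      push_cast
      rw [show ((2:ℚ))^k = 2^(k-a) * 2^a from by rw [← pow_add]; congr 1; omega]
      field_simp
    rw [harg]

lemma J_eval (m₂ : ℤ) (a : ℕ) (ha : 1 ≤ a) :
    ∑ y ∈ Finset.range (2^a), (-1:ℂ)^(y*a) * e2pi ((m₂ : ℚ) * y / ((2^a : ℕ) : ℚ))
      = (if ((2^(a-1) : ℕ) : ℤ) ∣ m₂ then ((2^(a-1) : ℕ) : ℂ) else 0)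
        + (-1:ℂ)^a * gaussG 2 2 (m₂ : ℚ) a := by
  rw [← Finset.sum_filter_add_sum_filter_not (Finset.range (2^a)) Odd]
  have hodd : ∑ y ∈ (Finset.range (2^a)).filter Odd,
      (-1:ℂ)^(y*a) * e2pi ((m₂ : ℚ) * y / ((2^a : ℕ) : ℚ))
      = (-1:ℂ)^a * gaussG 2 2 (m₂ : ℚ) a := by
    rw [gaussG_eq_oddSum m₂ a ha, Finset.mul_sum]
    refine Finset.sum_congr rfl fun y hy => ?_
    simp only [Finset.mem_filter] at hy
    rw [neg_one_pow_odd_mul y a hy.2]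
  have heven : ∑ y ∈ (Finset.range (2^a)).filter (fun y => ¬ Odd y),
      (-1:ℂ)^(y*a) * e2pi ((m₂ : ℚ) * y / ((2^a : ℕ) : ℚ))
      = (if ((2^(a-1) : ℕ) : ℤ) ∣ m₂ then ((2^(a-1) : ℕ) : ℂ) else 0) := by
    have h1 : ∀ y ∈ (Finset.range (2^a)).filter (fun y => ¬ Odd y),
        (-1:ℂ)^(y*a) * e2pi ((m₂ : ℚ) * y / ((2^a : ℕ) : ℚ))
          = e2pi ((m₂ : ℚ) * y / ((2^a : ℕ) : ℚ)) := by
      intro y hy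
      simp only [Finset.mem_filter, Nat.not_odd_iff_even] at hy
      rw [Even.neg_one_pow (hy.2.mul_right a), one_mul]
    rw [Finset.sum_congr rfl h1,
      show (2:ℕ)^a = 2*2^(a-1) from by rw [← pow_succ']; congr 1; omega,
      even_sum_halve (2^(a-1)) (fun y => e2pi ((m₂ : ℚ) * y / ((2*2^(a-1) : ℕ) : ℚ)))]
    rw [← sum_e2pi_geom m₂ (2^(a-1)) (by positivity)]
    refine Finset.sum_congr rfl fun z hz => ?_
    congr 1
    have h2 : ((2:ℚ))^(a-1) ≠ 0 := by positivity
    push_cast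
    field_simp
  rw [hodd, heven]
  ring

lemma u_sum (k a : ℕ) (ha : a < k) (m₁ : ℤ) :
    ∑ u ∈ (Finset.range (2^(k-a))).filter Odd,
      e2pi ((m₁ : ℚ) * ((2^a*u : ℕ) : ℚ) / ((2^k : ℕ) : ℚ))
      = gaussG 2 2 (m₁ : ℚ) (k-a) := by
  rw [gaussG_eq_oddSum m₁ (k-a) (by omega)]
  refine Finset.sum_congr rfl fun u hu => ?_
  congr 1
  have h1 : ((2:ℚ))^a ≠ 0 := by positivity
  have h2 : ((2:ℚ))^(k-a) ≠ 0 := by positivity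
  push_cast
  rw [show ((2:ℚ))^k = 2^a * 2^(k-a) from by rw [← pow_add]; congr 1; omega]
  field_simp

lemma gauss_eval (m : ℤ) (t : ℕ) (ht : 1 ≤ t) :
    gaussG 2 2 (m : ℚ) t
      = (if ((2^t : ℕ) : ℤ) ∣ m then ((2^t : ℕ) : ℂ) else 0)
        - (if ((2^(t-1) : ℕ) : ℤ) ∣ m then ((2^(t-1) : ℕ) : ℂ) else 0) := by
  rw [gaussG_eq_oddSum m t ht, oddSum_eval m t ht]

lemma delta_if (t : ℕ) (m : ℤ) :
    (if ((2^t : ℕ) : ℤ) ∣ m then ((2^t : ℕ) : ℂ) else 0)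
      = delta ((2:ℤ)^t ∣ m) * (2:ℂ)^t := by
  have he : ((2^t : ℕ) : ℤ) = (2:ℤ)^t := by push_cast; ring
  rw [he, delta]
  split_ifs
  · push_cast
    ring
  · ring

/-- Evaluation of `Σ(2^k, -2^k; m₁, m₂)`. -/
theorem sigma_equal_two_powers_neg (k : ℕ) (hk : 0 < k) (m₁ m₂ : ℤ) :
    SigmaExp ((2 : ℤ) ^ k) (-(2 : ℤ) ^ k) m₁ m₂ =
      (2 : ℂ) ^ k * delta (2 ∣ k) *
        (delta ((2 : ℤ) ^ k ∣ m₁) * (2 : ℂ) ^ k + delta ((2 : ℤ) ^ k ∣ m₂) * (2 : ℂ) ^ k -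
          delta ((2 : ℤ) ^ (k - 1) ∣ m₁) * (2 : ℂ) ^ (k - 1) +
          (∑ i ∈ Finset.Ico 1 k, (-1 : ℂ) ^ i * gaussG 2 2 m₁ (k - i) * gaussG 2 2 m₂ i) +
          ∑ i ∈ Finset.Ico 1 k,
            delta ((2 : ℤ) ^ (i - 1) ∣ m₂) * (2 : ℂ) ^ (i - 1) * gaussG 2 2 m₁ (k - i)) := by
  classical
  have h2kpos : (0:ℕ) < 2^k := by positivity
  set P : ℂ := ∑ t ∈ Finset.range (2^k), (-1:ℂ)^(t*k) with hP
  -- Step 1 : tsum to sum over Tset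
  have hrange_split : ∀ (f : ℕ → ℂ), ∑ a ∈ Finset.range k, f a
      = f 0 + ∑ a ∈ Finset.Ico 1 k, f a := by
    intro f
    rw [Finset.range_eq_Ico]
    exact Finset.sum_eq_sum_Ico_succ_bot hk f
  have hinj : ∀ x ∈ Tset k, ∀ y ∈ Tset k, phimap k x = phimap k y → x = y := by
    rintro ⟨b,β,t⟩ _ ⟨b',β',t'⟩ _ h
    simp only [phimap, Prod.mk.injEq] at h
    obtain ⟨h1, h2, h3, h4⟩ := h
    have e1 : b = b' := by exact_mod_cast h1
    have e2 : β = β' := by omega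
    have e3 : t = t' := by omega
    simp [e1, e2, e3]
  have hstep1 : SigmaExp ((2:ℤ)^k) (-(2:ℤ)^k) m₁ m₂ = ∑ v ∈ Tset k, Wfun k m₁ m₂ v := by
    rw [SigmaExp, plset_eq k hk]
    exact (Finset.tsum_subtype' ((Tset k).image (phimap k))
      (fun x => ((ssplit ((2:ℤ)^k) (-(2:ℤ)^k) x : ℤ) : ℂ) *
        e2pi ((m₁:ℚ) * ((x.1:ℚ) / (((2:ℤ)^k : ℤ):ℚ)) +
          (m₂:ℚ) * ((x.2.2.1:ℚ) / ((-(2:ℤ)^k : ℤ):ℚ))))).trans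
      (Finset.sum_image hinj)
  -- Step 2 : triple sum
  have hstep2 : ∑ v ∈ Tset k, Wfun k m₁ m₂ v
      = ∑ b ∈ Finset.range (2^k), ∑ β ∈ Finset.range (2^k),
          (if 2^k ∣ b*β then ∑ t ∈ Finset.range (2^k), Wfun k m₁ m₂ (b,β,t) else 0) := by
    rw [Tset, Finset.sum_filter, Finset.sum_product]
    refine Finset.sum_congr rfl fun b _ => ?_
    rw [Finset.sum_product]
    refine Finset.sum_congr rfl fun β _ => ?_
    dsimp only
    by_cases h : 2^k ∣ b*β
    · rw [if_pos h]
      refine Finset.sum_congr rfl fun t _ => ?_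
      rw [if_pos h]
    · rw [if_neg h]
      exact Finset.sum_eq_zero fun t _ => by rw [if_neg h]
  -- Step 3 : odd-part decomposition
  have hstep3 := odd_part_decomp k (fun b => ∑ β ∈ Finset.range (2^k),
      (if 2^k ∣ b*β then ∑ t ∈ Finset.range (2^k), Wfun k m₁ m₂ (b,β,t) else 0))
  -- Step 4 : b = 0 term
  have hF0 : (∑ β ∈ Finset.range (2^k),
      if 2^k ∣ 0*β then ∑ t ∈ Finset.range (2^k), Wfun k m₁ m₂ (0,β,t) else 0)
      = P * (if ((2^k:ℕ):ℤ) ∣ m₂ then ((2^k:ℕ):ℂ) else 0) := by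
    have h1 : ∀ β ∈ Finset.range (2^k),
        (if 2^k ∣ 0*β then ∑ t ∈ Finset.range (2^k), Wfun k m₁ m₂ (0,β,t) else 0)
        = P * e2pi ((m₂ : ℚ) * β / ((2^k : ℕ) : ℚ)) := by
      intro β _
      rw [if_pos (by simp),
        Finset.sum_congr rfl (fun t _ => Wfun_zero k m₁ m₂ β t hk), ← Finset.sum_mul]
    rw [Finset.sum_congr rfl h1, ← Finset.mul_sum, sum_e2pi_geom m₂ (2^k) h2kpos]
  -- Step 5 : positive b terms
  have hFa : ∀ a, a < k → ∀ u, Odd u →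
      (∑ β ∈ Finset.range (2^k),
        if 2^k ∣ (2^a*u)*β then ∑ t ∈ Finset.range (2^k), Wfun k m₁ m₂ (2^a*u,β,t) else 0)
      = P * (e2pi ((m₁:ℚ) * ((2^a*u:ℕ):ℚ) / ((2^k:ℕ):ℚ)) *
          ∑ y ∈ Finset.range (2^a), (-1:ℂ)^(y*a) * e2pi ((m₂:ℚ) * y / ((2^a:ℕ):ℚ))) := by
    intro a ha u hu
    have h1 : ∀ β ∈ Finset.range (2^k),
        (if 2^k ∣ (2^a*u)*β then ∑ t ∈ Finset.range (2^k), Wfun k m₁ m₂ (2^a*u,β,t) else 0)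
        = P * (e2pi ((m₁:ℚ) * ((2^a*u:ℕ):ℚ) / ((2^k:ℕ):ℚ)) *
            (if 2^k ∣ (2^a*u)*β then
              ((-1:ℂ)^(((2^a*u)*β/2^k)*a) * e2pi ((m₂ : ℚ) * β / ((2^k : ℕ) : ℚ))) else 0)) := by
      intro β _
      by_cases h : 2^k ∣ (2^a*u)*β
      · rw [if_pos h, if_pos h,
          Finset.sum_congr rfl (fun t _ => Wfun_pos k a u β t m₁ m₂ hk ha hu),
          ← Finset.sum_mul]
        ring
      · rw [if_neg h, if_neg h]
        ring
    rw [Finset.sum_congr rfl h1, ← Finset.mul_sum]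
    congr 1
    rw [← Finset.mul_sum]
    congr 1
    exact beta_sum k a u ha hu m₂
  -- Combine
  have hcomb : SigmaExp ((2:ℤ)^k) (-(2:ℤ)^k) m₁ m₂
      = P * ((if ((2^k:ℕ):ℤ) ∣ m₂ then ((2^k:ℕ):ℂ) else 0)
          + ∑ a ∈ Finset.range k, gaussG 2 2 (m₁:ℚ) (k-a) *
              ∑ y ∈ Finset.range (2^a), (-1:ℂ)^(y*a) * e2pi ((m₂:ℚ) * y / ((2^a:ℕ):ℚ))) := by
    rw [hstep1, hstep2, hstep3, hF0]
    rw [mul_add]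
    congr 1
    rw [Finset.mul_sum]
    refine Finset.sum_congr rfl fun a ha => ?_
    simp only [Finset.mem_range] at ha
    have h2 : ∀ u ∈ (Finset.range (2^(k-a))).filter Odd,
        (∑ β ∈ Finset.range (2^k),
          if 2^k ∣ (2^a*u)*β then ∑ t ∈ Finset.range (2^k), Wfun k m₁ m₂ (2^a*u,β,t) else 0)
        = P * (e2pi ((m₁:ℚ) * ((2^a*u:ℕ):ℚ) / ((2^k:ℕ):ℚ)) *
            ∑ y ∈ Finset.range (2^a), (-1:ℂ)^(y*a) * e2pi ((m₂:ℚ) * y / ((2^a:ℕ):ℚ))) := by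
      intro u hu
      simp only [Finset.mem_filter] at hu
      exact hFa a ha u hu.2
    rw [Finset.sum_congr rfl h2, ← Finset.mul_sum, ← Finset.sum_mul, u_sum k a ha m₁]
  rw [hcomb]
  by_cases hev : Even k
  · -- k even
    have hPval : P = ((2^k:ℕ):ℂ) := by rw [hP, t_sum_eval k hk, if_pos hev]
    have hdelta : delta (2 ∣ k) = 1 := by
      rw [delta, if_pos (even_iff_two_dvd.mp hev)]
    -- split range k at 0
    have hsplit : ∑ a ∈ Finset.range k, gaussG 2 2 (m₁:ℚ) (k-a) *
        ∑ y ∈ Finset.range (2^a), (-1:ℂ)^(y*a) * e2pi ((m₂:ℚ) * y / ((2^a:ℕ):ℚ))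
        = gaussG 2 2 (m₁:ℚ) k
          + ∑ a ∈ Finset.Ico 1 k, gaussG 2 2 (m₁:ℚ) (k-a) *
            ((if ((2^(a-1):ℕ):ℤ) ∣ m₂ then ((2^(a-1):ℕ):ℂ) else 0)
              + (-1:ℂ)^a * gaussG 2 2 (m₂:ℚ) a) := by
      rw [hrange_split (fun a => gaussG 2 2 (m₁:ℚ) (k-a) *
        ∑ y ∈ Finset.range (2^a), (-1:ℂ)^(y*a) * e2pi ((m₂:ℚ) * y / ((2^a:ℕ):ℚ)))]
      congr 1
      · -- a = 0 term
        have hJ0 : ∑ y ∈ Finset.range (2^0), (-1:ℂ)^(y*0) * e2pi ((m₂:ℚ) * y / ((2^0:ℕ):ℚ))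
            = 1 := by
          rw [pow_zero]
          rw [Finset.sum_range_one]
          have : ((m₂:ℚ) * (0:ℕ) / ((1:ℕ):ℚ)) = ((0:ℤ):ℚ) := by push_cast; ring
          rw [this, e2pi_intCast]
          norm_num
        rw [hJ0, Nat.sub_zero, mul_one]
      · refine Finset.sum_congr rfl fun a ha => ?_
        simp only [Finset.mem_Ico] at ha
        rw [J_eval m₂ a ha.1]
    rw [hsplit, hPval, hdelta]
    rw [gauss_eval m₁ k hk]
    have hexp : ∀ a ∈ Finset.Ico 1 k, gaussG 2 2 (m₁:ℚ) (k-a) *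
        ((if ((2^(a-1):ℕ):ℤ) ∣ m₂ then ((2^(a-1):ℕ):ℂ) else 0)
          + (-1:ℂ)^a * gaussG 2 2 (m₂:ℚ) a)
        = (delta ((2:ℤ)^(a-1) ∣ m₂) * (2:ℂ)^(a-1) * gaussG 2 2 (m₁:ℚ) (k-a))
          + ((-1:ℂ)^a * gaussG 2 2 (m₁:ℚ) (k-a) * gaussG 2 2 (m₂:ℚ) a) := by
      intro a _
      rw [delta_if]
      ring
    rw [Finset.sum_congr rfl hexp, Finset.sum_add_distrib]
    rw [delta_if k m₁, delta_if (k-1) m₁, delta_if k m₂]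
    push_cast
    ring
  · -- k odd
    have hPval : P = 0 := by rw [hP, t_sum_eval k hk, if_neg hev]
    have hdelta : delta (2 ∣ k) = 0 := by
      rw [delta, if_neg (fun h => hev (even_iff_two_dvd.mpr h))]
    rw [hPval, hdelta]
    ring
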